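/- Let s > 2 be an integer and S⁻ = { ∑_{n≥1} (-1)^n α_n / s^{α_1+...+α_n} : α_n ∈ {1,...,s-1} }. For any digits c_1,...,c_{n-1} ∈ {1,...,s-1} and any c_n ∈ {1,...,s-2}, the cylinders Δ⁻_{c_1...c_{n-1}c_n} and Δ⁻_{c_1...c_{n-1}[c_n+1]} are disjoint. -/

import Mathlib

lemma digit_le (s α : ℕ) (hs : 2 < s) (hα : 1 ≤ α) :
    (α : ℝ) / (s : ℝ) ^ α ≤ 1 / s := by
  have hs0 : (0:ℝ) < s := by exact_mod_cast Nat.lt_of_lt_of_le (by omega) (le_refl s)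
  have hnat : α * s ≤ s ^ α := by
    have h1 : α ≤ s ^ (α - 1) := by
      have : α - 1 < s ^ (α - 1) := Nat.lt_pow_self (show 1 < s by omega)
      omega
    calc α * s ≤ s ^ (α - 1) * s := Nat.mul_le_mul_right s h1
    _ = s ^ (α - 1 + 1) := (pow_succ s (α-1)).symm
    _ = s ^ α := by congr 1; omega
  rw [div_le_div_iff₀ (by positivity) hs0]
  calc (α:ℝ) * s = ((α * s : ℕ) : ℝ) := by push_cast; ring
  _ ≤ ((s ^ α : ℕ) : ℝ) := by exact_mod_cast hnat
  _ = 1 * (s:ℝ)^α := by push_cast; ring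

/-- Bounds for an alternating series whose first term is negative and whose terms
decrease in magnitude by a factor at least `s > 1`. -/
lemma alt_bounds (s : ℝ) (g : ℕ → ℝ) (hs1 : 1 < s)
    (hg0 : ∀ n, 0 < g n) (hgstep : ∀ n, g (n + 1) ≤ g n / s)
    (hsum : Summable (fun n => (-1:ℝ) ^ (n + 1) * g n)) :
    -(g 0) ≤ (∑' n, (-1:ℝ) ^ (n + 1) * g n) ∧ (∑' n, (-1:ℝ) ^ (n + 1) * g n) < 0 := by
  set f : ℕ → ℝ := fun n => (-1:ℝ) ^ (n + 1) * g n with hfdef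
  have hgg : ∀ n, g (n + 1) ≤ g n := fun n =>
    (hgstep n).trans (div_le_self (hg0 n).le hs1.le)
  have hfe : ∀ k, f (2 * k) = -g (2 * k) := by
    intro k
    have h : ((-1:ℝ)) ^ (2*k+1) = -1 := Odd.neg_one_pow ⟨k, by ring⟩
    rw [hfdef]; simp only; rw [h]; ring
  have hfo : ∀ k, f (2 * k + 1) = g (2 * k + 1) := by
    intro k
    have h : ((-1:ℝ)) ^ (2*k+1+1) = 1 := Even.neg_one_pow ⟨k+1, by ring⟩
    rw [hfdef]; simp only; rw [h]; ring
  have hse : Summable (fun k => f (2 * k)) :=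
    hsum.comp_injective (fun a b h => by omega)
  have hso : Summable (fun k => f (2 * k + 1)) :=
    hsum.comp_injective (fun a b h => by omega)
  constructor
  · -- lower bound
    have hshift : Summable (fun n => f (n + 1)) :=
      hsum.comp_injective (fun a b h => by omega)
    have hsplit : ∑' n, f n = f 0 + ∑' n, f (n + 1) := tsum_eq_zero_add' hshift
    have hse' : Summable (fun k => f (2 * k + 1 + 1)) :=
      hsum.comp_injective (fun a b h => by omega)
    have htail : 0 ≤ ∑' n, f (n + 1) := by
      have heo : (∑' k, f (2*k + 1)) + (∑' k, f (2*k + 1 + 1)) = ∑' n, f (n+1) :=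
        tsum_even_add_odd (f := fun n => f (n + 1)) hso hse'
      rw [← heo, ← Summable.tsum_add hso hse']
      refine tsum_nonneg fun k => ?_
      have e2 : f (2*k+1+1) = -g (2*k+1+1) := by
        have h2 := hfe (k+1)
        have h3 : 2*(k+1) = 2*k+1+1 := by ring
        rwa [h3] at h2
      have := hgg (2*k+1)
      rw [hfo k, e2]
      linarith
    have hf0 : f 0 = -g 0 := by
      have h0 := hfe 0
      norm_num at h0
      exact h0
    rw [hsplit, hf0]
    linarith
  · -- upper bound
    have heo : (∑' k, f (2*k)) + (∑' k, f (2*k+1)) = ∑' n, f n :=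
      tsum_even_add_odd hse hso
    set P : ℕ → ℝ := fun k => f (2*k) + f (2*k+1) with hPdef
    have hpair : ∑' n, f n = ∑' k, P k := by
      rw [← heo, ← Summable.tsum_add hse hso]
    have hPle : ∀ k, P k ≤ 0 := by
      intro k
      have h1 := hgg (2*k)
      rw [hPdef]; simp only
      rw [hfe k, hfo k]
      linarith
    have hP0 : P 0 < 0 := by
      have h1 := hgstep 0
      have h2 : g 0 / s < g 0 := div_lt_self (hg0 0) hs1
      have h3 := hPle 0
      have h4 : P 0 = f 0 + f 1 := by rw [hPdef]
      have e1 : f (2*0) = -g (2*0) := hfe 0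
      have e2 : f (2*0+1) = g (2*0+1) := hfo 0
      norm_num at e1 e2
      rw [hPdef]; simp only
      have e1' : f (2*0) = f 0 := by norm_num
      have e2' : f (2*0+1) = f 1 := by norm_num
      rw [← e1', ← e2', hfe 0, hfo 0]
      norm_num
      linarith [hg0 1, hg0 0]
    have hsP : Summable P := hse.add hso
    have hPs : Summable (fun k => P (k+1)) := hsP.comp_injective (fun a b h => by omega)
    have h3 : ∑' k, P k = P 0 + ∑' k, P (k+1) := tsum_eq_zero_add' hPs
    have h4 : ∑' k, P (k+1) ≤ 0 := tsum_nonpos fun k => hPle (k+1)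
    rw [hpair, h3]
    linarith

/-- The set `S⁻` of sums `∑ (-1)ⁿ αₙ / s^(α₁+⋯+αₙ)` over digit sequences with values in
`{1,…,s-1}` (the `n`-th term, counting from `1`, carries sign `(-1)ⁿ`). -/
def Sneg (s : ℕ) : Set ℝ :=
  {x : ℝ | ∃ α : ℕ → ℕ, (∀ n, 1 ≤ α n ∧ α n ≤ s - 1) ∧
    x = ∑' n : ℕ, (-1 : ℝ) ^ (n + 1) * (α n : ℝ) / (s : ℝ) ^ (∑ k ∈ Finset.range (n + 1), α k)}

lemma Sneg_bounds {s : ℕ} (hs : 2 < s) {x : ℝ} (hx : x ∈ Sneg s) :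
    -(1 / (s:ℝ)) ≤ x ∧ x < 0 := by
  obtain ⟨α, hα, rfl⟩ := hx
  have hs0 : (0:ℝ) < s := by exact_mod_cast Nat.lt_of_lt_of_le (by omega) (le_refl s)
  have hs1 : (1:ℝ) < s := by exact_mod_cast Nat.lt_of_lt_of_le (by omega) (le_refl s)
  set A : ℕ → ℕ := fun n => ∑ k ∈ Finset.range (n + 1), α k with hAdef
  set g : ℕ → ℝ := fun n => (α n : ℝ) / (s : ℝ) ^ (A n) with hgdef
  have hg0 : ∀ n, 0 < g n := by
    intro n
    have h1 : (0:ℝ) < α n := by exact_mod_cast (hα n).1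
    have h2 : (0:ℝ) < (s:ℝ) ^ A n := pow_pos hs0 _
    rw [hgdef]
    exact div_pos h1 h2
  have hAsucc : ∀ n, A (n + 1) = A n + α (n + 1) := fun n => Finset.sum_range_succ α (n + 1)
  have hA1 : ∀ n, n + 1 ≤ A n := by
    intro n
    calc n + 1 = ∑ _k ∈ Finset.range (n+1), 1 := by simp
    _ ≤ A n := Finset.sum_le_sum fun k _ => (hα k).1
  have hgstep : ∀ n, g (n + 1) ≤ g n / s := by
    intro n
    have hd := digit_le s (α (n+1)) hs (hα (n+1)).1
    have h1 : (1:ℝ) ≤ α n := by exact_mod_cast (hα n).1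
    have hpow : (0:ℝ) < (s:ℝ) ^ A n := by positivity
    calc g (n+1) = ((α (n+1):ℝ) / (s:ℝ)^(α (n+1))) / (s:ℝ)^(A n) := by
          rw [hgdef]; simp only; rw [hAsucc n, pow_add]; ring
    _ ≤ (1/(s:ℝ)) / (s:ℝ)^(A n) := by gcongr
    _ = 1 / ((s:ℝ)^(A n) * s) := by rw [div_div]; ring_nf
    _ ≤ (α n : ℝ) / ((s:ℝ)^(A n) * s) := by gcongr
    _ = g n / s := by rw [hgdef]; simp only; rw [div_div]
  have hgle : ∀ n, g n ≤ (1/(s:ℝ)) ^ n := by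
    intro n
    have h1 : (α n : ℝ) ≤ s := by
      have h2 : α n ≤ s := le_trans (hα n).2 (Nat.sub_le s 1)
      exact_mod_cast h2
    have h2 : (s:ℝ) ^ (n+1) ≤ (s:ℝ) ^ (A n) := pow_le_pow_right₀ hs1.le (hA1 n)
    calc g n ≤ (s:ℝ) / (s:ℝ)^(n+1) := div_le_div₀ hs0.le h1 (pow_pos hs0 (n+1)) h2
    _ = (1/(s:ℝ)) ^ n := by rw [pow_succ, div_pow, one_pow]; field_simp
  have hsum : Summable (fun n => (-1:ℝ) ^ (n+1) * g n) := by
    refine Summable.of_norm_bounded (g := fun n => (1/(s:ℝ))^n)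
      (summable_geometric_of_lt_one (by positivity) (by rw [div_lt_one hs0]; exact hs1)) ?_
    intro n
    rw [Real.norm_eq_abs, abs_mul, abs_pow, abs_neg, abs_one, one_pow, one_mul,
      abs_of_pos (hg0 n)]
    exact hgle n
  have hb := alt_bounds (s:ℝ) g hs1 hg0 hgstep hsum
  have hxg : (∑' n : ℕ, (-1:ℝ)^(n+1) * (α n : ℝ) / (s : ℝ) ^ (∑ k ∈ Finset.range (n+1), α k))
      = ∑' n, (-1:ℝ)^(n+1) * g n := by
    refine tsum_congr fun n => ?_
    rw [hgdef]; simp only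
    rw [mul_div_assoc]
  have hg0le : g 0 ≤ 1 / s := by
    have hA0 : A 0 = α 0 := by rw [hAdef]; simp
    rw [hgdef]; simp only; rw [hA0]
    exact digit_le s (α 0) hs (hα 0).1
  rw [hxg]
  refine ⟨?_, hb.2⟩
  linarith [hb.1]

/-- The cylinder `Δ⁻_{c₁…cₙ}` of rank `n` of `S⁻`: the image of `Sneg s` under the affine map
`y ↦ ∑_{k=1}^n (-1)ᵏ cₖ/s^(c₁+⋯+cₖ) + (-1)ⁿ s^{-(c₁+⋯+cₙ)} · y`. -/
def cylNeg (s n : ℕ) (c : ℕ → ℕ) : Set ℝ :=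
  (fun y : ℝ =>
    (∑ k ∈ Finset.range n,
        (-1 : ℝ) ^ (k + 1) * (c k : ℝ) / (s : ℝ) ^ (∑ j ∈ Finset.range (k + 1), c j)) +
      (-1 : ℝ) ^ n * ((s : ℝ) ^ (∑ k ∈ Finset.range n, c k))⁻¹ * y) '' Sneg s

/-- Adjacent cylinders of `S⁻` are disjoint: for `cₙ ∈ {1,…,s-2}`, the cylinders
`Δ⁻_{c₁…c_{n-1}cₙ}` and `Δ⁻_{c₁…c_{n-1}[cₙ+1]}` have empty intersection. -/
theorem stmt12 (s n : ℕ) (hs : 2 < s) (c : ℕ → ℕ)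
    (hc : ∀ k < n, 1 ≤ c k ∧ c k ≤ s - 1) (cn : ℕ) (hcn : 1 ≤ cn) (hcn' : cn ≤ s - 2) :
    Disjoint (cylNeg s (n + 1) (Function.update c n cn))
      (cylNeg s (n + 1) (Function.update c n (cn + 1))) := by
  have hs0 : (0:ℝ) < s := by exact_mod_cast Nat.lt_of_lt_of_le (by omega) (le_refl s)
  rw [Set.disjoint_left]
  rintro x ⟨y1, hy1, hx1⟩ ⟨y2, hy2, hx2⟩
  obtain ⟨hy1l, hy1u⟩ := Sneg_bounds hs hy1
  obtain ⟨hy2l, hy2u⟩ := Sneg_bounds hs hy2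
  set A := ∑ k ∈ Finset.range n, c k with hA
  have hpref : ∀ d : ℕ, ∀ k, k ≤ n →
      ∑ j ∈ Finset.range k, Function.update c n d j = ∑ j ∈ Finset.range k, c j := by
    intro d k hk
    refine Finset.sum_congr rfl fun j hj => ?_
    have : j < n := lt_of_lt_of_le (Finset.mem_range.mp hj) hk
    exact Function.update_of_ne this.ne d c
  have hdig : ∀ d : ℕ,
      ∑ k ∈ Finset.range (n+1), Function.update c n d k = A + d := by
    intro d
    rw [Finset.sum_range_succ, hpref d n le_rfl, Function.update_self]
  have hbig : ∀ d : ℕ,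
      ∑ k ∈ Finset.range (n+1), (-1:ℝ)^(k+1) * (Function.update c n d k : ℝ) /
          (s:ℝ) ^ (∑ j ∈ Finset.range (k+1), Function.update c n d j)
        = (∑ k ∈ Finset.range n, (-1:ℝ)^(k+1) * (c k : ℝ) /
            (s:ℝ) ^ (∑ j ∈ Finset.range (k+1), c j)) + (-1:ℝ)^(n+1) * (d:ℝ) / (s:ℝ)^(A + d) := by
    intro d
    rw [Finset.sum_range_succ]
    congr 1
    · refine Finset.sum_congr rfl fun k hk => ?_
      have hk' : k < n := Finset.mem_range.mp hk
      rw [Function.update_of_ne hk'.ne d c, hpref d (k+1) hk']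
    · rw [Function.update_self]
      rw [hdig d]
  simp only [cylNeg, Set.mem_image] at hx1 hx2
  rw [hbig cn, hdig cn] at hx1
  rw [hbig (cn+1), hdig (cn+1)] at hx2
  have hE := hx1.trans hx2.symm
  have hene : ((-1:ℝ))^(n+1) ≠ 0 := pow_ne_zero _ (by norm_num)
  have hu : (cn:ℝ)/(s:ℝ)^(A+cn) + ((s:ℝ)^(A+cn))⁻¹ * y1
      = ((cn:ℝ)+1)/(s:ℝ)^(A+(cn+1)) + ((s:ℝ)^(A+(cn+1)))⁻¹ * y2 := by
    refine mul_left_cancel₀ hene ?_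
    push_cast at hE ⊢
    linear_combination hE
  have hpow : (0:ℝ) < (s:ℝ)^(A+cn) := pow_pos hs0 _
  have hsp : ((s:ℝ)^(A+(cn+1))) = (s:ℝ)^(A+cn) * s := by
    rw [show A+(cn+1) = (A+cn)+1 by ring, pow_succ]
  rw [hsp] at hu
  have hkey : (s:ℝ) * ((cn:ℝ) + y1) = (cn:ℝ) + 1 + y2 := by
    have hne : ((s:ℝ)^(A+cn)) ≠ 0 := hpow.ne'
    have hsne : (s:ℝ) ≠ 0 := hs0.ne'
    field_simp at hu
    exact mul_left_cancel₀ hne (by linear_combination (s:ℝ)^(A+cn) * hu)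
  have h3 : (3:ℝ) ≤ s := by exact_mod_cast (by omega : 3 ≤ s)
  have hcn1 : (1:ℝ) ≤ cn := by exact_mod_cast hcn
  have hsy1 : -1 ≤ (s:ℝ) * y1 := by
    have h := mul_le_mul_of_nonneg_left hy1l hs0.le
    have h2 : (s:ℝ) * -(1/(s:ℝ)) = -1 := by field_simp
    linarith [h, h2.ge, h2.le]
  have hprod : (3:ℝ) * cn ≤ (s:ℝ) * cn :=
    mul_le_mul_of_nonneg_right h3 (by positivity)
  nlinarith [hkey, hsy1, hy2u, hcn1, hprod]
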